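/- Let 0 < R < R' < 1, A = 1/log(R'/R), ρ' = (1/2)log((1+R')/(1−R')) − (1/2)log((1+R)/(1−R)), and let ψ_{R,R'} : ℂ → ℝ equal 1 on {|z| ≤ R}, equal (R' − |z|)/(R' − R) on {R ≤ |z| ≤ R'}, and equal 0 on {|z| ≥ R'}. Then for every ε > 0 there exists δ > 0 such that whenever 1 − δ < R < R' < 1 and ρ' ≥ 1, one has | (∫_𝔻 ψ_{R,R'} dv_P) / (4π A ρ') − 1 | < ε. -/

import Mathlib

open Complex Metric Set MeasureTheory

/-- The function `ψ_{R,R'}`: equal to `1` on `{|z| ≤ R}`, to `(R' - |z|)/(R' - R)` on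
`{R ≤ |z| ≤ R'}`, and to `0` on `{|z| ≥ R'}`. -/
noncomputable def psiRR (R R' : ℝ) (z : ℂ) : ℝ :=
  if ‖z‖ ≤ R then 1
  else if ‖z‖ ≤ R' then (R' - ‖z‖) / (R' - R)
  else 0

lemma ftc1 {y : ℝ} (hy : 1 - y^2 ≠ 0) :
    HasDerivAt (fun y : ℝ => 2/(1-y^2)) (4*y/(1-y^2)^2) y := by
  have h := hy
  have h1 : HasDerivAt (fun y : ℝ => 1 - y^2) (-(2*y)) y := by
    simpa using ((hasDerivAt_pow 2 y).const_sub 1)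
  have := (h1.inv h).const_mul (2:ℝ)
  exact this.congr_deriv (by field_simp; ring)

lemma ftc2 {R' y : ℝ} (hy1 : -1 < y) (hy2 : y < 1) :
    HasDerivAt (fun y : ℝ => (R'-y)*(2/(1-y^2)) + (Real.log (1+y) - Real.log (1-y)))
      ((R'-y)*(4*y/(1-y^2)^2)) y := by
  have h : (1:ℝ) - y^2 ≠ 0 := by nlinarith
  have hA : HasDerivAt (fun y : ℝ => (R'-y)*(2/(1-y^2)))
      ((-1)*(2/(1-y^2)) + (R'-y)*(4*y/(1-y^2)^2)) y :=
    HasDerivAt.mul (by simpa using (hasDerivAt_id y).const_sub R') (ftc1 h)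
  have hB : HasDerivAt (fun y : ℝ => Real.log (1+y) - Real.log (1-y))
      (1/(1+y) - (-1)/(1-y)) y := by
    have hb1 : HasDerivAt (fun y : ℝ => Real.log (1+y)) (1/(1+y)) y := by
      have := (Real.hasDerivAt_log (by linarith : (1:ℝ)+y ≠ 0)).comp y
        (by simpa using (hasDerivAt_id y).const_add 1)
      simpa [one_div, Function.comp_def] using this
    have hb2 : HasDerivAt (fun y : ℝ => Real.log (1-y)) ((-1)/(1-y)) y := by
      have := (Real.hasDerivAt_log (by linarith : (1:ℝ)-y ≠ 0)).comp y
        (by simpa using (hasDerivAt_id y).const_sub 1)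
      simpa [div_eq_mul_inv, Function.comp_def] using this
    exact hb1.sub hb2
  have h1 : (1:ℝ)+y ≠ 0 := by linarith
  have h2 : (1:ℝ)-y ≠ 0 := by linarith
  exact (hA.add hB).congr_deriv (by field_simp; ring)

lemma int1 {R : ℝ} (h0 : 0 ≤ R) (h2 : R < 1) :
    ∫ y in (0:ℝ)..R, 4*y/(1-y^2)^2 = 2/(1-R^2) - 2 := by
  have key : ∀ y ∈ Set.uIcc (0:ℝ) R, (1:ℝ) - y^2 ≠ 0 := by
    intro y hy
    rw [Set.uIcc_of_le h0] at hy
    nlinarith [hy.1, hy.2]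
  have := intervalIntegral.integral_eq_sub_of_hasDerivAt
    (f := fun y : ℝ => 2/(1-y^2)) (f' := fun y : ℝ => 4*y/(1-y^2)^2)
    (fun y hy => ftc1 (key y hy))
    (ContinuousOn.intervalIntegrable (by
      apply ContinuousOn.div (by fun_prop)
      · fun_prop
      · intro y hy; exact pow_ne_zero 2 (key y hy)))
  rw [this]
  norm_num

lemma int2 {R R' : ℝ} (h0 : 0 ≤ R) (hRR' : R ≤ R') (h2 : R' < 1) :
    ∫ y in R..R', (R'-y)*(4*y/(1-y^2)^2) =
      (Real.log (1+R') - Real.log (1-R'))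
        - ((R'-R)*(2/(1-R^2)) + (Real.log (1+R) - Real.log (1-R))) := by
  have key : ∀ y ∈ Set.uIcc R R', -1 < y ∧ y < 1 := by
    intro y hy
    rw [Set.uIcc_of_le hRR'] at hy
    constructor <;> nlinarith [hy.1, hy.2]
  have := intervalIntegral.integral_eq_sub_of_hasDerivAt
    (f := fun y : ℝ => (R'-y)*(2/(1-y^2)) + (Real.log (1+y) - Real.log (1-y)))
    (f' := fun y : ℝ => (R'-y)*(4*y/(1-y^2)^2))
    (fun y hy => ftc2 (key y hy).1 (key y hy).2)
    (ContinuousOn.intervalIntegrable (by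
      apply ContinuousOn.mul (by fun_prop)
      apply ContinuousOn.div (by fun_prop) (by fun_prop)
      intro y hy
      have := key y hy
      apply pow_ne_zero; nlinarith [this.1, this.2]))
  rw [this]
  ring

set_option maxHeartbeats 1000000 in
lemma key_integral {R R' : ℝ} (h0 : 0 < R) (h1 : R < R') (h2 : R' < 1) :
    (∫ z in Metric.ball (0:ℂ) 1, psiRR R R' z * (4/(1 - ‖z‖^2)^2) ∂volume)
      = 2 * Real.pi * (((Real.log (1+R') - Real.log (1-R'))
          - (Real.log (1+R) - Real.log (1-R)))/(R'-R) - 2) := by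
  set f : ℝ → ℝ := fun r =>
    (if r ≤ R then 1 else if r ≤ R' then (R'-r)/(R'-R) else 0) * (4/(1-r^2)^2) with hf
  have hfeq : ∀ z : ℂ, psiRR R R' z * (4/(1 - ‖z‖^2)^2) = f ‖z‖ := by
    intro z
    simp [psiRR, hf]
  have step1 : (∫ z in Metric.ball (0:ℂ) 1, psiRR R R' z * (4/(1 - ‖z‖^2)^2) ∂volume)
      = ∫ z : ℂ, f ‖z‖ ∂volume := by
    simp_rw [hfeq]
    apply setIntegral_eq_integral_of_forall_compl_eq_zero
    intro z hz
    have : (1:ℝ) ≤ ‖z‖ := by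
      simpa [Complex.dist_eq] using (not_lt.mp (by simpa [Metric.mem_ball] using hz))
    have hn1 : ¬ (‖z‖ ≤ R) := by push_neg; linarith
    have hn2 : ¬ (‖z‖ ≤ R') := by push_neg; linarith
    simp [hf, hn1, hn2]
  have step2 : (∫ z : ℂ, f ‖z‖ ∂volume)
      = 2 • (volume (Metric.ball (0:ℂ) 1)).toReal • ∫ y in Set.Ioi (0:ℝ), y ^ 1 • f y := by
    have := MeasureTheory.integral_fun_norm_addHaar (volume : Measure ℂ) f
    simpa [Complex.finrank_real_complex, Measure.real] using this
  have hvol : (volume (Metric.ball (0:ℂ) 1)).toReal = Real.pi := by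
    simp [Complex.volume_ball]
  -- restrict Ioi 0 to Ioc 0 R'
  set g : ℝ → ℝ := fun y => y * f y with hg
  have step3 : (∫ y in Set.Ioi (0:ℝ), y ^ 1 • f y) = ∫ y in (0:ℝ)..R', g y := by
    rw [intervalIntegral.integral_of_le (by linarith : (0:ℝ) ≤ R')]
    simp only [pow_one, smul_eq_mul]
    refine setIntegral_eq_of_subset_of_forall_diff_eq_zero (t := Set.Ioi (0:ℝ))
      (s := Set.Ioc (0:ℝ) R') measurableSet_Ioi Set.Ioc_subset_Ioi_self ?_
    intro y hy
    have hy1 : 0 < y := hy.1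
    have hy2 : ¬ (y ≤ R') := fun hc => hy.2 ⟨hy.1, hc⟩
    have hn1 : ¬ (y ≤ R) := fun hc => hy2 (le_trans hc (le_of_lt h1))
    simp [hg, hf, hn1, hy2]
  -- the nice forms on each subinterval
  have hRne : R' - R ≠ 0 := by linarith
  have eq1 : Set.EqOn g (fun y => 4*y/(1-y^2)^2) (Set.uIcc 0 R) := by
    intro y hy
    rw [Set.uIcc_of_le (le_of_lt h0)] at hy
    simp only [hg, hf, if_pos hy.2]
    ring
  have eq2 : Set.EqOn g (fun y => ((R'-y)*(4*y/(1-y^2)^2))/(R'-R)) (Set.uIcc R R') := by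
    intro y hy
    rw [Set.uIcc_of_le (le_of_lt h1)] at hy
    by_cases hyR : y ≤ R
    · have hyR' : y = R := le_antisymm hyR hy.1
      subst hyR'
      simp only [hg, hf, if_pos le_rfl]
      rw [mul_div_cancel_left₀ _ hRne]
      ring
    · simp only [hg, hf, if_neg hyR, if_pos hy.2]
      ring
  have cont1 : ContinuousOn (fun y : ℝ => 4*y/(1-y^2)^2) (Set.uIcc 0 R) := by
    apply ContinuousOn.div (by fun_prop) (by fun_prop)
    intro y hy
    rw [Set.uIcc_of_le (le_of_lt h0)] at hy
    apply pow_ne_zero; nlinarith [hy.1, hy.2]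
  have cont2 : ContinuousOn (fun y : ℝ => ((R'-y)*(4*y/(1-y^2)^2))/(R'-R)) (Set.uIcc R R') := by
    apply ContinuousOn.div
    · apply ContinuousOn.mul (by fun_prop)
      refine ContinuousOn.div (by fun_prop) (by fun_prop) (fun y hy => ?_)
      rw [Set.uIcc_of_le (le_of_lt h1)] at hy
      exact pow_ne_zero 2 (by nlinarith [hy.1, hy.2])
    · fun_prop
    · intro y _; exact hRne
  have ii1 : IntervalIntegrable g volume 0 R := by
    rw [intervalIntegrable_iff_integrableOn_Ioc_of_le (le_of_lt h0)]
    apply MeasureTheory.IntegrableOn.congr_fun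
      ((cont1.intervalIntegrable).1) (fun y hy => (eq1 (by
        rw [Set.uIcc_of_le (le_of_lt h0)]; exact ⟨le_of_lt hy.1, hy.2⟩)).symm) measurableSet_Ioc
  have ii2 : IntervalIntegrable g volume R R' := by
    rw [intervalIntegrable_iff_integrableOn_Ioc_of_le (le_of_lt h1)]
    apply MeasureTheory.IntegrableOn.congr_fun
      ((cont2.intervalIntegrable).1) (fun y hy => (eq2 (by
        rw [Set.uIcc_of_le (le_of_lt h1)]; exact ⟨le_of_lt hy.1, hy.2⟩)).symm) measurableSet_Ioc
  have split : (∫ y in (0:ℝ)..R', g y) = (∫ y in (0:ℝ)..R, g y) + ∫ y in R..R', g y :=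
    (intervalIntegral.integral_add_adjacent_intervals ii1 ii2).symm
  have val1 : (∫ y in (0:ℝ)..R, g y) = 2/(1-R^2) - 2 := by
    rw [intervalIntegral.integral_congr eq1]
    exact int1 (le_of_lt h0) (by linarith)
  have val2 : (∫ y in R..R', g y) =
      ((Real.log (1+R') - Real.log (1-R'))
        - ((R'-R)*(2/(1-R^2)) + (Real.log (1+R) - Real.log (1-R))))/(R'-R) := by
    rw [intervalIntegral.integral_congr eq2, intervalIntegral.integral_div]
    rw [int2 (le_of_lt h0) (le_of_lt h1) h2]
  rw [step1, step2, hvol, step3, split, val1, val2]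
  have hR2 : (1:ℝ) - R^2 ≠ 0 := by nlinarith
  simp only [smul_eq_mul]
  rw [sub_add_eq_sub_sub, sub_right_comm (Real.log (1+R') - Real.log (1-R')), sub_div _ ((R'-R)*(2/(1-R^2))), mul_div_cancel_left₀ _ hRne]
  ring


set_option maxHeartbeats 2000000 in
theorem poincare_integral_psi_asymptotic :
    ∀ ε > (0 : ℝ), ∃ δ > (0 : ℝ), ∀ R R' : ℝ, 1 - δ < R → R < R' → R' < 1 → 0 < R →
      (1 / 2) * Real.log ((1 + R') / (1 - R')) -
        (1 / 2) * Real.log ((1 + R) / (1 - R)) ≥ 1 →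
      |(∫ z in Metric.ball (0 : ℂ) 1,
            psiRR R R' z * (4 / (1 - ‖z‖ ^ 2) ^ 2) ∂volume) /
          (4 * Real.pi * (1 / Real.log (R' / R)) *
            ((1 / 2) * Real.log ((1 + R') / (1 - R')) -
              (1 / 2) * Real.log ((1 + R) / (1 - R)))) - 1| < ε := by
  intro ε hε
  refine ⟨min (1/2) (ε/3), lt_min (by norm_num) (by linarith), ?_⟩
  intro R R' hδR hRR' hR'1 hR0 hρ
  have hδ2 : min (1/2:ℝ) (ε/3) ≤ 1/2 := min_le_left _ _
  have hδ3 : min (1/2:ℝ) (ε/3) ≤ ε/3 := min_le_right _ _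
  have hδpos : (0:ℝ) < min (1/2) (ε/3) := lt_min (by norm_num) (by linarith)
  have hRhalf : (1:ℝ)/2 < R := by linarith
  have hlog1 : Real.log ((1+R')/(1-R')) = Real.log (1+R') - Real.log (1-R') :=
    Real.log_div (by linarith) (by linarith)
  have hlog2 : Real.log ((1+R)/(1-R)) = Real.log (1+R) - Real.log (1-R) :=
    Real.log_div (by linarith) (by linarith)
  set ρ : ℝ := (1/2) * Real.log ((1+R')/(1-R')) - (1/2) * Real.log ((1+R)/(1-R)) with hρdef
  have hs : (Real.log (1+R') - Real.log (1-R')) - (Real.log (1+R) - Real.log (1-R)) = 2 * ρ := by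
    rw [hρdef, hlog1, hlog2]; ring
  rw [key_integral hR0 hRR' hR'1, hs]
  set c : ℝ := Real.log (R'/R) with hcdef
  have hc : 0 < c := Real.log_pos (by rw [lt_div_iff₀ hR0]; linarith)
  have hρ1 : (1:ℝ) ≤ ρ := hρ
  have hd : (0:ℝ) < R' - R := by linarith
  have hkey : 2*Real.pi*(2*ρ/(R'-R) - 2) / (4*Real.pi*(1/c)*ρ) = c/(R'-R) - c/ρ := by
    have hπ : Real.pi ≠ 0 := Real.pi_ne_zero
    have h1 : c ≠ 0 := ne_of_gt hc
    have h2 : ρ ≠ 0 := by linarith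
    have h3 : R' - R ≠ 0 := ne_of_gt hd
    field_simp
    ring
  rw [hkey]
  -- bounds
  have hub : c ≤ (R'-R)/R := by
    have := Real.log_le_sub_one_of_pos (div_pos (by linarith : (0:ℝ) < R') hR0)
    rw [hcdef]
    calc Real.log (R'/R) ≤ R'/R - 1 := this
    _ = (R'-R)/R := by field_simp
  have hlb : R' - R ≤ c := by
    have h := Real.log_le_sub_one_of_pos (div_pos hR0 (by linarith : (0:ℝ) < R'))
    have hlog : Real.log (R/R') = -c := by
      rw [hcdef, ← Real.log_inv]
      rw [inv_div]
    rw [hlog] at h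
    have : 1 - R/R' ≤ c := by linarith
    have hR'ne : (R':ℝ) ≠ 0 := ne_of_gt (by linarith)
    calc R' - R = (1 - R/R') * R' := by
          rw [sub_mul, one_mul, div_mul_cancel₀ _ hR'ne]
    _ ≤ c * R' := by nlinarith
    _ ≤ c * 1 := by nlinarith
    _ = c := mul_one c
  have ha0 : 1 ≤ c/(R'-R) := (one_le_div hd).mpr hlb
  have haM : c/(R'-R) ≤ 1/R := by
    rw [div_le_div_iff₀ hd hR0]
    calc c * R ≤ ((R'-R)/R) * R := by nlinarith
    _ = R' - R := by field_simp
    _ ≤ 1 * (R'-R) := by linarith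
  have hb0 : 0 ≤ c/ρ := div_nonneg (le_of_lt hc) (by linarith)
  have hbM : c/ρ ≤ (1-R)/R := by
    calc c/ρ ≤ c/1 := by
          apply div_le_div_of_nonneg_left (le_of_lt hc) one_pos hρ1
    _ = c := div_one c
    _ ≤ (R'-R)/R := hub
    _ ≤ (1-R)/R := by gcongr <;> linarith
  have heq : (1-R)/R = 1/R - 1 := by
    rw [sub_div, div_self (ne_of_gt hR0)]
  have hM : (1-R)/R < ε := by
    rw [div_lt_iff₀ hR0]
    nlinarith [mul_pos hε (show (0:ℝ) < R - 1/2 by linarith)]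
  rw [abs_lt]
  constructor <;> linarith
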